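/- arXiv:2310.04886 — 3 statements merged into one kernel-verified Lean document; each statement's English description precedes it below -/
import Mathlib

section
/- Let ω, a ∈ ℝ³ and g ∈ ℝ be constants, let a_g = (0,0,g), let Ω = [ω]^∧, and let θ = ‖ω‖ with θ ≠ 0. Given R₀ ∈ SO(3) and v₀, p₀ ∈ ℝ³, define for t ∈ ℝ: R(t) = R₀ · exp(tΩ), v(t) = v₀ + t·a_g + R₀ · ( t·I₃ + ((1 − cos(θt))/θ²)·Ω + ((θt − sin(θt))/θ³)·Ω² ) · a, and p(t) = p₀ + t·v₀ + (t²/2)·a_g + R₀ · ( (t²/2)·I₃ + ((θt − sin(θt))/θ³)·Ω + ((θ²t²/2 − 1 + cos(θt))/θ⁴)·Ω² ) · a. Then R(0) = R₀, v(0) = v₀, p(0) = p₀, and for every t ∈ ℝ: R′(t) = R(t)·Ω, v′(t) = R(t)·a + a_g, and p′(t) = v(t). (Closed-form solution of the strapdown inertial navigation initial value problem.) -/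
open Matrix
open NormedSpace

/-- The hat map `[ω]^∧`: the skew-symmetric matrix satisfying `([ω]^∧) x = ω × x`. -/
noncomputable def hat (ω : EuclideanSpace ℝ (Fin 3)) : Matrix (Fin 3) (Fin 3) ℝ :=
  !![0, -ω 2, ω 1; ω 2, 0, -ω 0; -ω 1, ω 0, 0]

/-- The 3×2 matrix with the two given columns. -/
noncomputable def cols (u w : Fin 3 → ℝ) : Matrix (Fin 3) (Fin 2) ℝ :=
  Matrix.of fun i j => ![u i, w i] j

lemma hat_cube (ω : EuclideanSpace ℝ (Fin 3)) :
    hat ω ^ 3 = (-(‖ω‖^2)) • hat ω := by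
  have hn : ‖ω‖^2 = ω 0^2 + ω 1^2 + ω 2^2 := by
    rw [EuclideanSpace.norm_eq, Real.sq_sqrt (by positivity)]
    simp [Fin.sum_univ_three, Real.norm_eq_abs, sq_abs]
  ext i j
  fin_cases i <;> fin_cases j <;>
    simp [hat, pow_succ, Matrix.mul_apply, Fin.sum_univ_three, hn] <;> ring

-- scalar derivative helpers
lemma hderiv_sin (θ : ℝ) (hθ0 : θ ≠ 0) (s : ℝ) :
    HasDerivAt (fun u => Real.sin (θ*u)/θ) (Real.cos (θ*s)) s := by
  have h := ((Real.hasDerivAt_sin (θ*s)).comp s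
    ((hasDerivAt_id s).const_mul θ)).div_const θ
  refine h.congr_deriv ?_
  field_simp

lemma hderiv_cos (θ : ℝ) (hθ0 : θ ≠ 0) (s : ℝ) :
    HasDerivAt (fun u => (1 - Real.cos (θ*u))/θ^2) (Real.sin (θ*s)/θ) s := by
  have h := (((hasDerivAt_const s (1:ℝ)).sub
    ((Real.hasDerivAt_cos (θ*s)).comp s ((hasDerivAt_id s).const_mul θ))).div_const (θ^2))
  refine h.congr_deriv ?_
  field_simp
  ring

lemma rod_mul (ω : EuclideanSpace ℝ (Fin 3)) {θ : ℝ} (hθ : θ = ‖ω‖) (hθ0 : θ ≠ 0) (s : ℝ) :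
    (1 + (Real.sin (θ*s)/θ) • hat ω + ((1 - Real.cos (θ*s))/θ^2) • hat ω ^ 2) * hat ω
      = Real.cos (θ*s) • hat ω + (Real.sin (θ*s)/θ) • hat ω ^ 2 := by
  have h3 : hat ω ^ 2 * hat ω = (-(θ^2)) • hat ω := by
    rw [← pow_succ, hat_cube, hθ]
  rw [add_mul, add_mul, one_mul, smul_mul_assoc, smul_mul_assoc, h3,
    ← pow_two]
  rw [smul_smul]
  have hc : (1 - Real.cos (θ*s))/θ^2 * (-(θ^2)) = Real.cos (θ*s) - 1 := by
    field_simp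
    ring
  rw [hc]
  module

lemma rodrigues (ω : EuclideanSpace ℝ (Fin 3)) {θ : ℝ} (hθ : θ = ‖ω‖) (hθ0 : θ ≠ 0) (t : ℝ) :
    NormedSpace.exp (t • hat ω) = 1 + (Real.sin (θ*t)/θ) • hat ω
      + ((1 - Real.cos (θ*t))/θ^2) • hat ω ^ 2 := by
  letI : NormedRing (Matrix (Fin 3) (Fin 3) ℝ) := Matrix.linftyOpNormedRing
  letI : NormedAlgebra ℝ (Matrix (Fin 3) (Fin 3) ℝ) := Matrix.linftyOpNormedAlgebra
  set Ω := hat ω with hΩdef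
  set Rod : ℝ → Matrix (Fin 3) (Fin 3) ℝ :=
    fun s => 1 + (Real.sin (θ*s)/θ) • Ω + ((1 - Real.cos (θ*s))/θ^2) • Ω^2 with hRod
  have hcomm : ∀ s, Ω * Rod s = Rod s * Ω := by
    intro s
    simp only [hRod, mul_add, add_mul, mul_one, one_mul, mul_smul_comm, smul_mul_assoc,
      ← pow_succ, ← pow_succ']
  have hRod' : ∀ s, HasDerivAt Rod (Real.cos (θ*s) • Ω + (Real.sin (θ*s)/θ) • Ω^2) s := by
    intro s
    have h := (((hasDerivAt_const s (1 : Matrix (Fin 3) (Fin 3) ℝ)).add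
      ((hderiv_sin θ hθ0 s).smul_const Ω)).add
      ((hderiv_cos θ hθ0 s).smul_const (Ω^2)))
    simp only [zero_add] at h
    exact h
  have hG : ∀ s, HasDerivAt (fun u => NormedSpace.exp (u • (-Ω)) * Rod u)
      (0 : Matrix (Fin 3) (Fin 3) ℝ) s := by
    intro s
    have hexp : HasDerivAt (fun u : ℝ => NormedSpace.exp (u • (-Ω))) ((-Ω) * NormedSpace.exp (s • (-Ω))) s :=
      hasDerivAt_exp_smul_const' (-Ω) s
    have h := hexp.mul (hRod' s)
    refine h.congr_deriv ?_
    have hEΩ : Ω * NormedSpace.exp (s • (-Ω)) = NormedSpace.exp (s • (-Ω)) * Ω :=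
      (((Commute.refl Ω).neg_right.smul_right s).exp_right).eq
    have hRodΩ : Rod s * Ω = Real.cos (θ*s) • Ω + (Real.sin (θ*s)/θ) • Ω^2 := by
      simp only [hRod]
      exact rod_mul ω hθ hθ0 s
    rw [neg_mul, hEΩ, neg_mul, mul_assoc, hcomm s, hRodΩ]
    simp
  have hconst : ∀ s : ℝ, NormedSpace.exp (s • (-Ω)) * Rod s = 1 := by
    intro s
    have h0 : (fun u : ℝ => NormedSpace.exp (u • (-Ω)) * Rod u) s
        = (fun u : ℝ => NormedSpace.exp (u • (-Ω)) * Rod u) 0 :=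
      is_const_of_deriv_eq_zero (fun x => (hG x).differentiableAt)
        (fun x => (hG x).deriv) s 0
    simpa [hRod, NormedSpace.exp_zero] using h0
  have hinv : NormedSpace.exp (t • Ω) * NormedSpace.exp (t • (-Ω)) = 1 := by
    rw [← Matrix.exp_add_of_commute _ _ (((Commute.refl Ω).neg_right.smul_left t).smul_right t)]
    rw [smul_neg, add_neg_cancel]
    exact NormedSpace.exp_zero
  calc NormedSpace.exp (t • Ω) = NormedSpace.exp (t • Ω) * (NormedSpace.exp (t • (-Ω)) * Rod t) := by rw [hconst, mul_one]
    _ = (NormedSpace.exp (t • Ω) * NormedSpace.exp (t • (-Ω))) * Rod t := by rw [mul_assoc]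
    _ = Rod t := by rw [hinv, one_mul]

lemma hderiv_lin (θ : ℝ) (hθ0 : θ ≠ 0) (s : ℝ) :
    HasDerivAt (fun u => (θ*u - Real.sin (θ*u))/θ^3) ((1 - Real.cos (θ*s))/θ^2) s := by
  have h := (((hasDerivAt_id s).const_mul θ).sub
    ((Real.hasDerivAt_sin (θ*s)).comp s ((hasDerivAt_id s).const_mul θ))).div_const (θ^3)
  refine h.congr_deriv ?_
  field_simp

lemma hderiv_quad (θ : ℝ) (hθ0 : θ ≠ 0) (s : ℝ) :
    HasDerivAt (fun u => (θ^2*u^2/2 - 1 + Real.cos (θ*u))/θ^4) ((θ*s - Real.sin (θ*s))/θ^3) s := by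
  have h := (((((hasDerivAt_pow 2 s).const_mul (θ^2)).div_const 2).sub
    (hasDerivAt_const s (1:ℝ))).add
    ((Real.hasDerivAt_cos (θ*s)).comp s ((hasDerivAt_id s).const_mul θ))).div_const (θ^4)
  refine h.congr_deriv ?_
  field_simp
  ring

lemma hasDerivAt_entry3 {f₀ f₁ f₂ : ℝ → ℝ} {d₀ d₁ d₂ t : ℝ}
    (h₀ : HasDerivAt f₀ d₀ t) (h₁ : HasDerivAt f₁ d₁ t) (h₂ : HasDerivAt f₂ d₂ t)
    (A B C : Matrix (Fin 3) (Fin 3) ℝ) (i j : Fin 3) :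
    HasDerivAt (fun s => (f₀ s • A + f₁ s • B + f₂ s • C) i j)
      ((d₀ • A + d₁ • B + d₂ • C) i j) t := by
  simp only [Matrix.add_apply, Matrix.smul_apply, smul_eq_mul]
  exact ((h₀.mul_const _).add (h₁.mul_const _)).add (h₂.mul_const _)

lemma hasDerivAt_mulVec3 {f₀ f₁ f₂ : ℝ → ℝ} {d₀ d₁ d₂ t : ℝ}
    (h₀ : HasDerivAt f₀ d₀ t) (h₁ : HasDerivAt f₁ d₁ t) (h₂ : HasDerivAt f₂ d₂ t)
    (A B C : Matrix (Fin 3) (Fin 3) ℝ) (a : Fin 3 → ℝ) (i : Fin 3) :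
    HasDerivAt (fun s => ((f₀ s • A + f₁ s • B + f₂ s • C).mulVec a) i)
      (((d₀ • A + d₁ • B + d₂ • C).mulVec a) i) t := by
  simp only [Matrix.mulVec, dotProduct]
  exact HasDerivAt.fun_sum fun j _ => (hasDerivAt_entry3 h₀ h₁ h₂ A B C i j).mul_const (a j)

/-- Closed-form solution of the strapdown inertial navigation initial value problem. -/
theorem stmt0 (ω a : EuclideanSpace ℝ (Fin 3)) (g : ℝ)
    (a_g : Fin 3 → ℝ) (ha_g : a_g = ![0, 0, g])
    (Ω : Matrix (Fin 3) (Fin 3) ℝ) (hΩ : Ω = hat ω)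
    (θ : ℝ) (hθ : θ = ‖ω‖) (hθ0 : θ ≠ 0)
    (R₀ : Matrix (Fin 3) (Fin 3) ℝ) (hR₀ : R₀ ∈ Matrix.specialOrthogonalGroup (Fin 3) ℝ)
    (v₀ p₀ : Fin 3 → ℝ)
    (R : ℝ → Matrix (Fin 3) (Fin 3) ℝ)
    (hR : ∀ t : ℝ, R t = R₀ * NormedSpace.exp (t • Ω))
    (v : ℝ → Fin 3 → ℝ)
    (hv : ∀ t : ℝ, v t = v₀ + t • a_g +
      (R₀ * (t • (1 : Matrix (Fin 3) (Fin 3) ℝ)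
        + ((1 - Real.cos (θ * t)) / θ ^ 2) • Ω
        + ((θ * t - Real.sin (θ * t)) / θ ^ 3) • Ω ^ 2)).mulVec a)
    (p : ℝ → Fin 3 → ℝ)
    (hp : ∀ t : ℝ, p t = p₀ + t • v₀ + (t ^ 2 / 2) • a_g +
      (R₀ * ((t ^ 2 / 2) • (1 : Matrix (Fin 3) (Fin 3) ℝ)
        + ((θ * t - Real.sin (θ * t)) / θ ^ 3) • Ω
        + ((θ ^ 2 * t ^ 2 / 2 - 1 + Real.cos (θ * t)) / θ ^ 4) • Ω ^ 2)).mulVec a) :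
    R 0 = R₀ ∧ v 0 = v₀ ∧ p 0 = p₀ ∧
    ∀ t : ℝ,
      (∀ i j, HasDerivAt (fun s => R s i j) ((R t * Ω) i j) t) ∧
      (∀ i, HasDerivAt (fun s => v s i) (((R t).mulVec a + a_g) i) t) ∧
      (∀ i, HasDerivAt (fun s => p s i) (v t i) t) := by
  subst hΩ
  have hrod := fun s => rodrigues ω hθ hθ0 s
  have hRshape : ∀ s, R s = (1:ℝ) • R₀ + (Real.sin (θ*s)/θ) • (R₀ * hat ω)
      + ((1 - Real.cos (θ*s))/θ^2) • (R₀ * hat ω ^ 2) := by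
    intro s
    rw [hR s, hrod s, mul_add, mul_add, mul_one, mul_smul_comm, mul_smul_comm, one_smul]
  have hvshape : ∀ s, v s = v₀ + s • a_g + ((s • R₀
      + ((1 - Real.cos (θ*s))/θ^2) • (R₀ * hat ω)
      + ((θ*s - Real.sin (θ*s))/θ^3) • (R₀ * hat ω ^ 2)).mulVec a) := by
    intro s
    rw [hv s, mul_add, mul_add, mul_smul_comm, mul_smul_comm, mul_smul_comm, mul_one]
  have hpshape : ∀ s, p s = p₀ + s • v₀ + (s^2/2) • a_g + (((s^2/2) • R₀
      + ((θ*s - Real.sin (θ*s))/θ^3) • (R₀ * hat ω)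
      + ((θ^2*s^2/2 - 1 + Real.cos (θ*s))/θ^4) • (R₀ * hat ω ^ 2)).mulVec a) := by
    intro s
    rw [hp s, mul_add, mul_add, mul_smul_comm, mul_smul_comm, mul_smul_comm, mul_one]
  refine ⟨?_, ?_, ?_, ?_⟩
  · rw [hR 0]
    simp [NormedSpace.exp_zero]
  · rw [hv 0]
    simp
  · rw [hp 0]
    norm_num
  intro t
  refine ⟨?_, ?_, ?_⟩
  · intro i j
    have key : ((0:ℝ) • R₀ + Real.cos (θ*t) • (R₀ * hat ω)
        + (Real.sin (θ*t)/θ) • (R₀ * hat ω ^ 2)) = R t * hat ω := by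
      rw [hR t, hrod t, mul_assoc, rod_mul ω hθ hθ0 t, mul_add, mul_smul_comm, mul_smul_comm,
        zero_smul, zero_add]
    have h := hasDerivAt_entry3 (hasDerivAt_const t (1:ℝ)) (hderiv_sin θ hθ0 t)
      (hderiv_cos θ hθ0 t) R₀ (R₀ * hat ω) (R₀ * hat ω ^ 2) i j
    rw [key] at h
    exact h.congr_of_eventuallyEq (Filter.Eventually.of_forall fun s => by simp only [hRshape])
  · intro i
    have h : HasDerivAt (fun s => v₀ i + s * a_g i + ((s • R₀
        + ((1 - Real.cos (θ*s))/θ^2) • (R₀ * hat ω)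
        + ((θ*s - Real.sin (θ*s))/θ^3) • (R₀ * hat ω ^ 2)).mulVec a) i)
        (((R t).mulVec a + a_g) i) t := by
      have h0 := ((hasDerivAt_const t (v₀ i)).add ((hasDerivAt_id t).mul_const (a_g i))).add
        (hasDerivAt_mulVec3 (hasDerivAt_id t) (hderiv_cos θ hθ0 t) (hderiv_lin θ hθ0 t)
          R₀ (R₀ * hat ω) (R₀ * hat ω ^ 2) a i)
      refine h0.congr_deriv ?_
      rw [show (1:ℝ) • R₀ + (Real.sin (θ*t)/θ) • (R₀ * hat ω)
          + ((1 - Real.cos (θ*t))/θ^2) • (R₀ * hat ω ^ 2) = R t from (hRshape t).symm]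
      simp [Pi.add_apply]
      ring
    exact h.congr_of_eventuallyEq (Filter.Eventually.of_forall fun s => by
      simp only [hvshape]; simp [smul_eq_mul])
  · intro i
    have hsq : HasDerivAt (fun u : ℝ => u^2/2) t t := by
      simpa using (hasDerivAt_pow 2 t).div_const 2
    have h : HasDerivAt (fun s => p₀ i + s * v₀ i + s^2/2 * a_g i + (((s^2/2) • R₀
        + ((θ*s - Real.sin (θ*s))/θ^3) • (R₀ * hat ω)
        + ((θ^2*s^2/2 - 1 + Real.cos (θ*s))/θ^4) • (R₀ * hat ω ^ 2)).mulVec a) i)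
        (v t i) t := by
      have h0 := (((hasDerivAt_const t (p₀ i)).add ((hasDerivAt_id t).mul_const (v₀ i))).add
        (hsq.mul_const (a_g i))).add
        (hasDerivAt_mulVec3 hsq (hderiv_lin θ hθ0 t) (hderiv_quad θ hθ0 t)
          R₀ (R₀ * hat ω) (R₀ * hat ω ^ 2) a i)
      refine h0.congr_deriv ?_
      rw [hvshape t]
      simp [Pi.add_apply, smul_eq_mul]
    exact h.congr_of_eventuallyEq (Filter.Eventually.of_forall fun s => by
      simp only [hpshape]; simp [smul_eq_mul])
end

section
/- Let ω, a ∈ ℝ³, g ∈ ℝ, a_g = (0,0,g), Ω = [ω]^∧, and let a = (a_x, a_y, a_z). Define the 5×5 real matrices M = [[0₃ₓ₃, A_M],[0₂ₓ₃, −B]] and N = [[Ω, A_N],[0₂ₓ₃, B]], where A_M is the 3×2 matrix with columns (a_g, 0), A_N is the 3×2 matrix with columns (a, 0), and B = [[0,1],[0,0]]. Let R : ℝ → ℝ^{3×3} and v, p : ℝ → ℝ³ be differentiable, and let X(t) be the 5×5 matrix [[R(t), v(t), p(t)],[0,1,0],[0,0,1]]. Then X′(t) = M·X(t) + X(t)·N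 holds at t if and only if R′(t) = R(t)·Ω, v′(t) = R(t)·a + a_g, and p′(t) = v(t). (The SINS kinematics are a mixed-invariant system on SE₂(3).) -/
open Matrix

/-- The SINS kinematics are a mixed-invariant system on SE₂(3). -/
theorem stmt3 (ω a : EuclideanSpace ℝ (Fin 3)) (g : ℝ)
    (a_g : Fin 3 → ℝ) (ha_g : a_g = ![0, 0, g])
    (Ω : Matrix (Fin 3) (Fin 3) ℝ) (hΩ : Ω = hat ω)
    (A_M : Matrix (Fin 3) (Fin 2) ℝ) (hAM : A_M = cols a_g 0)
    (A_N : Matrix (Fin 3) (Fin 2) ℝ) (hAN : A_N = cols (fun i => a i) 0)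
    (B : Matrix (Fin 2) (Fin 2) ℝ) (hB : B = !![0, 1; 0, 0])
    (M : Matrix (Fin 3 ⊕ Fin 2) (Fin 3 ⊕ Fin 2) ℝ) (hM : M = Matrix.fromBlocks 0 A_M 0 (-B))
    (N : Matrix (Fin 3 ⊕ Fin 2) (Fin 3 ⊕ Fin 2) ℝ) (hN : N = Matrix.fromBlocks Ω A_N 0 B)
    (R : ℝ → Matrix (Fin 3) (Fin 3) ℝ) (v p : ℝ → Fin 3 → ℝ)
    (hRd : ∀ i j, Differentiable ℝ fun s => R s i j)
    (hvd : ∀ i, Differentiable ℝ fun s => v s i)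
    (hpd : ∀ i, Differentiable ℝ fun s => p s i)
    (X : ℝ → Matrix (Fin 3 ⊕ Fin 2) (Fin 3 ⊕ Fin 2) ℝ)
    (hX : ∀ t : ℝ, X t = Matrix.fromBlocks (R t) (cols (v t) (p t)) 0 1)
    (t : ℝ) :
    (∀ i j, HasDerivAt (fun s => X s i j) ((M * X t + X t * N) i j) t) ↔
      ((∀ i j, HasDerivAt (fun s => R s i j) ((R t * Ω) i j) t) ∧
       (∀ i, HasDerivAt (fun s => v s i) (((R t).mulVec a + a_g) i) t) ∧
       (∀ i, HasDerivAt (fun s => p s i) (v t i) t)) := by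
  have hD11 : ∀ i j, (M * X t + X t * N) (Sum.inl i) (Sum.inl j) = (R t * Ω) i j := by
    intro i j
    simp [hM, hN, hX, hΩ, hAM, hAN, hB, ha_g, Matrix.add_apply, Matrix.mul_apply,
      Fintype.sum_sum_type, cols, Fin.sum_univ_three, Fin.sum_univ_two, hat]
  have hD12 : ∀ i, (M * X t + X t * N) (Sum.inl i) (Sum.inr 0) = ((R t).mulVec a + a_g) i := by
    intro i
    simp [hM, hN, hX, hΩ, hAM, hAN, hB, ha_g, Matrix.add_apply, Matrix.mul_apply,
      Matrix.mulVec, dotProduct, Fintype.sum_sum_type, cols, Fin.sum_univ_three,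
      Fin.sum_univ_two, hat]
    ring
  have hD13 : ∀ i, (M * X t + X t * N) (Sum.inl i) (Sum.inr 1) = v t i := by
    intro i
    simp [hM, hN, hX, hΩ, hAM, hAN, hB, ha_g, Matrix.add_apply, Matrix.mul_apply,
      Fintype.sum_sum_type, cols, Fin.sum_univ_three, Fin.sum_univ_two, hat]
  have hD2 : ∀ i j, (M * X t + X t * N) (Sum.inr i) j = 0 := by
    intro i j
    rcases j with j | j <;> fin_cases i <;> [skip; skip; fin_cases j; fin_cases j] <;>
      simp [hM, hN, hX, hΩ, hAM, hAN, hB, ha_g, Matrix.add_apply, Matrix.mul_apply,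
        Fintype.sum_sum_type, cols, Fin.sum_univ_three, Fin.sum_univ_two, hat,
        Matrix.one_apply]
  have hX11 : ∀ i j, (fun s => X s (Sum.inl i) (Sum.inl j)) = fun s => R s i j := by
    intro i j; funext s; simp [hX]
  have hX12 : ∀ i, (fun s => X s (Sum.inl i) (Sum.inr 0)) = fun s => v s i := by
    intro i; funext s; simp [hX, cols]
  have hX13 : ∀ i, (fun s => X s (Sum.inl i) (Sum.inr 1)) = fun s => p s i := by
    intro i; funext s; simp [hX, cols]
  constructor
  · intro h
    refine ⟨fun i j => ?_, fun i => ?_, fun i => ?_⟩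
    · have := h (Sum.inl i) (Sum.inl j); rwa [hX11, hD11] at this
    · have := h (Sum.inl i) (Sum.inr 0); rwa [hX12, hD12] at this
    · have := h (Sum.inl i) (Sum.inr 1); rwa [hX13, hD13] at this
  · rintro ⟨hR, hv, hp⟩ i j
    cases i with
    | inl i =>
      cases j with
      | inl j => rw [hX11, hD11]; exact hR i j
      | inr j =>
        fin_cases j
        · show HasDerivAt (fun s => X s (Sum.inl i) (Sum.inr 0))
            ((M * X t + X t * N) (Sum.inl i) (Sum.inr 0)) t
          rw [hX12, hD12]; exact hv i
        · show HasDerivAt (fun s => X s (Sum.inl i) (Sum.inr 1))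
            ((M * X t + X t * N) (Sum.inl i) (Sum.inr 1)) t
          rw [hX13, hD13]; exact hp i
    | inr i =>
      rw [hD2]
      have hc : (fun s => X s (Sum.inr i) j) = fun _ => X t (Sum.inr i) j := by
        funext s; rcases j with j | j <;> simp [hX]
      rw [hc]; exact hasDerivAt_const t _
end

section
/- Let Ω be a 3×3 real matrix, A a 3×2 real matrix, and B a 2×2 real matrix with B² = 0, and let l be the 5×5 block matrix [[Ω, A],[0₂ₓ₃, B]]. Then exp(l) = [[exp(Ω), 𝒩],[0₂ₓ₃, I₂ + B]], where 𝒩 = A + Σ_{n=2}^{∞} (Ω^{n−1}A + Ω^{n−2}AB)/n!. -/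
open Matrix

section aux

variable {R : Type*} [Semiring R] {p q r s : Type*}

/-- Extracting a submatrix, as an additive monoid hom. -/
def tbHom (e₁ : p → q) (e₂ : r → s) : Matrix q s R →+ Matrix p r R where
  toFun M := M.submatrix e₁ e₂
  map_zero' := rfl
  map_add' _ _ := rfl

theorem continuous_tbHom (e₁ : p → q) (e₂ : r → s) :
    Continuous (tbHom (R := ℝ) e₁ e₂) :=
  continuous_id.matrix_submatrix e₁ e₂

variable {p' q' : Type*}

@[simp] theorem tbHom_fromBlocks₁₁ (W : Matrix p r R) (X : Matrix p q' R) (Y : Matrix p' r R)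
    (Z : Matrix p' q' R) : tbHom Sum.inl Sum.inl (fromBlocks W X Y Z) = W := rfl

@[simp] theorem tbHom_fromBlocks₁₂ (W : Matrix p r R) (X : Matrix p q' R) (Y : Matrix p' r R)
    (Z : Matrix p' q' R) : tbHom Sum.inl Sum.inr (fromBlocks W X Y Z) = X := rfl

@[simp] theorem tbHom_fromBlocks₂₁ (W : Matrix p r R) (X : Matrix p q' R) (Y : Matrix p' r R)
    (Z : Matrix p' q' R) : tbHom Sum.inr Sum.inl (fromBlocks W X Y Z) = Y := rfl

@[simp] theorem tbHom_fromBlocks₂₂ (W : Matrix p r R) (X : Matrix p q' R) (Y : Matrix p' r R)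
    (Z : Matrix p' q' R) : tbHom Sum.inr Sum.inr (fromBlocks W X Y Z) = Z := rfl

end aux

/-- Exponential of the block matrix `l = [[Ω, A], [0, B]]` with `B² = 0`.
The series `𝒩 = A + Σ_{n=2}^∞ (Ω^{n-1}A + Ω^{n-2}AB)/n!` is written with the index shifted
by two: `Σ_{n=0}^∞ (Ω^{n+1}A + Ω^{n}AB)/(n+2)!`. -/
theorem stmt5 (Ω : Matrix (Fin 3) (Fin 3) ℝ) (A : Matrix (Fin 3) (Fin 2) ℝ)
    (B : Matrix (Fin 2) (Fin 2) ℝ) (hB : B ^ 2 = 0)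
    (l : Matrix (Fin 3 ⊕ Fin 2) (Fin 3 ⊕ Fin 2) ℝ) (hl : l = Matrix.fromBlocks Ω A 0 B)
    (𝒩 : Matrix (Fin 3) (Fin 2) ℝ)
    (h𝒩 : 𝒩 = A + ∑' n : ℕ,
      (Nat.factorial (n + 2) : ℝ)⁻¹ • (Ω ^ (n + 1) * A + Ω ^ n * A * B)) :
    NormedSpace.exp l = Matrix.fromBlocks (NormedSpace.exp Ω) 𝒩 0 (1 + B) := by
  letI : SeminormedRing (Matrix (Fin 3 ⊕ Fin 2) (Fin 3 ⊕ Fin 2) ℝ) :=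
    Matrix.linftyOpSemiNormedRing
  letI : NormedRing (Matrix (Fin 3 ⊕ Fin 2) (Fin 3 ⊕ Fin 2) ℝ) := Matrix.linftyOpNormedRing
  letI : NormedAlgebra ℝ (Matrix (Fin 3 ⊕ Fin 2) (Fin 3 ⊕ Fin 2) ℝ) :=
    Matrix.linftyOpNormedAlgebra
  letI : SeminormedRing (Matrix (Fin 3) (Fin 3) ℝ) := Matrix.linftyOpSemiNormedRing
  letI : NormedRing (Matrix (Fin 3) (Fin 3) ℝ) := Matrix.linftyOpNormedRing
  letI : NormedAlgebra ℝ (Matrix (Fin 3) (Fin 3) ℝ) := Matrix.linftyOpNormedAlgebra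
  have hBB : B * B = 0 := by rw [← sq]; exact hB
  -- powers of l
  have hpow : ∀ n : ℕ, l ^ (n + 2) =
      Matrix.fromBlocks (Ω ^ (n + 2)) (Ω ^ (n + 1) * A + Ω ^ n * A * B) 0 0 := by
    intro n
    induction n with
    | zero =>
      rw [show (0:ℕ) + 2 = 2 from rfl, sq, hl, Matrix.fromBlocks_multiply]
      simp [hBB, sq, Matrix.mul_assoc]
    | succ k ih =>
      rw [show k + 1 + 2 = (k + 2) + 1 from rfl, pow_succ, ih, hl,
        Matrix.fromBlocks_multiply]
      simp only [Matrix.add_mul, Matrix.mul_assoc, hBB, Matrix.mul_zero, Matrix.zero_mul,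
        add_zero, zero_add, pow_succ]
  set f : ℕ → Matrix (Fin 3 ⊕ Fin 2) (Fin 3 ⊕ Fin 2) ℝ :=
    fun n => ((n.factorial : ℝ)⁻¹) • l ^ n with hf_def
  have hf : HasSum f (NormedSpace.exp l) := NormedSpace.exp_series_hasSum_exp' l
  -- block forms of f
  have hF0 : f 0 = Matrix.fromBlocks 1 0 0 1 := by
    simp [hf_def, Matrix.fromBlocks_one]
  have hF1 : f 1 = Matrix.fromBlocks Ω A 0 B := by
    simp [hf_def, hl]
  have hF2 : ∀ n : ℕ, f (n + 2) = Matrix.fromBlocks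
      (((n + 2).factorial : ℝ)⁻¹ • Ω ^ (n + 2))
      (((n + 2).factorial : ℝ)⁻¹ • (Ω ^ (n + 1) * A + Ω ^ n * A * B)) 0 0 := by
    intro n
    rw [hf_def]
    simp only [hpow n, Matrix.fromBlocks_smul, smul_zero]
  -- block 2 1
  have h21 : (NormedSpace.exp l).toBlocks₂₁ = 0 := by
    have hS := hf.map (tbHom (R := ℝ) Sum.inr Sum.inl) (continuous_tbHom _ _)
    have hz : (⇑(tbHom (R := ℝ) (Sum.inr : Fin 2 → Fin 3 ⊕ Fin 2)
        (Sum.inl : Fin 3 → Fin 3 ⊕ Fin 2)) ∘ f) = fun _ => 0 := by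
      funext n
      match n with
      | 0 => simp only [Function.comp_apply, hF0, tbHom_fromBlocks₁₁, tbHom_fromBlocks₁₂, tbHom_fromBlocks₂₁, tbHom_fromBlocks₂₂]
      | 1 => simp only [Function.comp_apply, hF1, tbHom_fromBlocks₁₁, tbHom_fromBlocks₁₂, tbHom_fromBlocks₂₁, tbHom_fromBlocks₂₂]
      | (n + 2) => simp only [Function.comp_apply, hF2 n, tbHom_fromBlocks₁₁, tbHom_fromBlocks₁₂, tbHom_fromBlocks₂₁, tbHom_fromBlocks₂₂]
    rw [hz] at hS
    exact hS.unique hasSum_zero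
  -- block 2 2
  have h22 : (NormedSpace.exp l).toBlocks₂₂ = 1 + B := by
    have hS := hf.map (tbHom (R := ℝ) Sum.inr Sum.inr) (continuous_tbHom _ _)
    set t := ⇑(tbHom (R := ℝ) (Sum.inr : Fin 2 → Fin 3 ⊕ Fin 2)
      (Sum.inr : Fin 2 → Fin 3 ⊕ Fin 2)) ∘ f with ht_def
    have ht0 : t 0 = 1 := by simp only [ht_def, Function.comp_apply, hF0, tbHom_fromBlocks₁₁, tbHom_fromBlocks₁₂, tbHom_fromBlocks₂₁, tbHom_fromBlocks₂₂]
    have ht1 : t 1 = B := by simp only [ht_def, Function.comp_apply, hF1, tbHom_fromBlocks₁₁, tbHom_fromBlocks₁₂, tbHom_fromBlocks₂₁, tbHom_fromBlocks₂₂]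
    have ht2 : ∀ n, t (n + 2) = 0 := by
      intro n; simp only [ht_def, Function.comp_apply, hF2 n, tbHom_fromBlocks₁₁, tbHom_fromBlocks₁₂, tbHom_fromBlocks₂₁, tbHom_fromBlocks₂₂]
    have hshift : HasSum (fun n => t (n + 2)) 0 := by
      simpa [ht2] using (hasSum_zero (α := Matrix (Fin 2) (Fin 2) ℝ) (β := ℕ))
    have h' := (hasSum_nat_add_iff (f := t) 2).mp hshift
    rw [show (∑ i ∈ Finset.range 2, t i) = t 0 + t 1 by simp [Finset.sum_range_succ],
      ht0, ht1, zero_add] at h'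
    exact hS.unique h'
  -- block 1 1
  have h11 : (NormedSpace.exp l).toBlocks₁₁ = NormedSpace.exp Ω := by
    have hS := hf.map (tbHom (R := ℝ) Sum.inl Sum.inl) (continuous_tbHom _ _)
    have hz : (⇑(tbHom (R := ℝ) (Sum.inl : Fin 3 → Fin 3 ⊕ Fin 2)
        (Sum.inl : Fin 3 → Fin 3 ⊕ Fin 2)) ∘ f) =
        fun n => ((n.factorial : ℝ)⁻¹) • Ω ^ n := by
      funext n
      match n with
      | 0 => simp only [Function.comp_apply, hF0, tbHom_fromBlocks₁₁, tbHom_fromBlocks₁₂, tbHom_fromBlocks₂₁, tbHom_fromBlocks₂₂]; simp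
      | 1 => simp only [Function.comp_apply, hF1, tbHom_fromBlocks₁₁, tbHom_fromBlocks₁₂, tbHom_fromBlocks₂₁, tbHom_fromBlocks₂₂]; simp
      | (n + 2) => simp only [Function.comp_apply, hF2 n, tbHom_fromBlocks₁₁, tbHom_fromBlocks₁₂, tbHom_fromBlocks₂₁, tbHom_fromBlocks₂₂]
    rw [hz] at hS
    exact hS.unique (NormedSpace.exp_series_hasSum_exp' Ω)
  -- block 1 2
  have h12 : (NormedSpace.exp l).toBlocks₁₂ = 𝒩 := by
    have hS := hf.map (tbHom (R := ℝ) Sum.inl Sum.inr) (continuous_tbHom _ _)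
    set t := ⇑(tbHom (R := ℝ) (Sum.inl : Fin 3 → Fin 3 ⊕ Fin 2)
      (Sum.inr : Fin 2 → Fin 3 ⊕ Fin 2)) ∘ f with ht_def
    have ht0 : t 0 = 0 := by simp only [ht_def, Function.comp_apply, hF0, tbHom_fromBlocks₁₁, tbHom_fromBlocks₁₂, tbHom_fromBlocks₂₁, tbHom_fromBlocks₂₂]
    have ht1 : t 1 = A := by simp only [ht_def, Function.comp_apply, hF1, tbHom_fromBlocks₁₁, tbHom_fromBlocks₁₂, tbHom_fromBlocks₂₁, tbHom_fromBlocks₂₂]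
    have ht2 : ∀ n, t (n + 2) =
        ((n + 2).factorial : ℝ)⁻¹ • (Ω ^ (n + 1) * A + Ω ^ n * A * B) := by
      intro n; simp only [ht_def, Function.comp_apply, hF2 n, tbHom_fromBlocks₁₁, tbHom_fromBlocks₁₂, tbHom_fromBlocks₂₁, tbHom_fromBlocks₂₂]
    have hsum : Summable t := hS.summable
    have hsum2 : Summable fun n => t (n + 2) := (summable_nat_add_iff 2).mpr hsum
    have hc : HasSum (fun n => t (n + 2)) (∑' n, t (n + 2)) := hsum2.hasSum
    have h' := (hasSum_nat_add_iff (f := t) 2).mp hc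
    rw [show (∑ i ∈ Finset.range 2, t i) = t 0 + t 1 by simp [Finset.sum_range_succ],
      ht0, ht1, zero_add] at h'
    have htsum : (∑' n, t (n + 2)) =
        ∑' n : ℕ, ((n + 2).factorial : ℝ)⁻¹ • (Ω ^ (n + 1) * A + Ω ^ n * A * B) :=
      tsum_congr ht2
    rw [htsum] at h'
    rw [h𝒩, add_comm]
    exact hS.unique h'
  calc NormedSpace.exp l
      = Matrix.fromBlocks (NormedSpace.exp l).toBlocks₁₁ (NormedSpace.exp l).toBlocks₁₂
        (NormedSpace.exp l).toBlocks₂₁ (NormedSpace.exp l).toBlocks₂₂ :=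
        (Matrix.fromBlocks_toBlocks _).symm
    _ = _ := by rw [h11, h12, h21, h22]
end
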